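/- The integers 8, 12 and 24 are monomially irreducible. -/

import Mathlib

namespace Monomial

/-- The elementary matrix `[[a, -1], [1, 0]]` over `ZMod N`. -/
def mat {N : ℕ} (a : ZMod N) : Matrix (Fin 2) (Fin 2) (ZMod N) := !![a, -1; 1, 0]

/-- `M [a₁, …, aₙ] = mat aₙ * ⋯ * mat a₁`. -/
def M {N : ℕ} (l : List (ZMod N)) : Matrix (Fin 2) (Fin 2) (ZMod N) :=
  (l.reverse.map mat).prod

/-- A tuple is a solution of (E_N) if the associated matrix is `±Id`. -/
def IsSolution {N : ℕ} (l : List (ZMod N)) : Prop := M l = 1 ∨ M l = -1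

/-- The sum `(a₁,…,aₙ) ⊕ (b₁,…,bₘ) = (a₁+bₘ, a₂,…,aₙ₋₁, aₙ+b₁, b₂,…,bₘ₋₁)`. -/
def osum {N : ℕ} (u v : List (ZMod N)) : List (ZMod N) :=
  (u.headI + v.getLastD 0) ::
    ((u.drop 1).dropLast ++ (u.getLastD 0 + v.headI) :: (v.drop 1).dropLast)

/-- Equivalence: `v` is a cyclic permutation of `u` or of the reversal of `u`. -/
def CyclicEquiv {N : ℕ} (u v : List (ZMod N)) : Prop :=
  (∃ i, v = u.rotate i) ∨ (∃ i, v = u.reverse.rotate i)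

/-- A tuple is reducible if, up to equivalence, it is a sum of an `m`-tuple (`m ≥ 3`)
with a solution of size `l ≥ 3`. -/
def Reducible {N : ℕ} (c : List (ZMod N)) : Prop :=
  ∃ a b : List (ZMod N), 3 ≤ a.length ∧ 3 ≤ b.length ∧ IsSolution b ∧
    CyclicEquiv c (osum a b)

/-- An irreducible solution: a solution which is not reducible (and `(0,0)` is
not considered irreducible). -/
def IrreducibleSol {N : ℕ} (c : List (ZMod N)) : Prop :=
  IsSolution c ∧ ¬ Reducible c ∧ c ≠ [0, 0]

/-- The size of the `k`-monomial minimal solution of (E_N): the least `n > 0` such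
that the constant `n`-tuple `(k, …, k)` is a solution. -/
noncomputable def monomialMinimalSize (N : ℕ) (k : ZMod N) : ℕ :=
  sInf {n | 0 < n ∧ IsSolution (List.replicate n k)}

/-- `N` is monomially irreducible if, for every `k ≠ 0`, the `k`-monomial minimal
solution of (E_N) is irreducible. -/
def MonomiallyIrreducible (N : ℕ) : Prop :=
  ∀ k : ZMod N, k ≠ 0 → IrreducibleSol (List.replicate (monomialMinimalSize N k) k)

/-- The continuant `Kₙ(x, …, x)` at a constant tuple: `K₀ = 1`, `K₁ = x`,
`Kₙ₊₂ = x * Kₙ₊₁ - Kₙ`. -/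
def K {N : ℕ} (x : ZMod N) : ℕ → ZMod N
  | 0 => 1
  | 1 => x
  | n + 2 => x * K x (n + 1) - K x n

/-- Shifted continuant: `Kp x 0 = 0`, `Kp x (j+1) = K x j`. -/
def Kp {N : ℕ} (x : ZMod N) : ℕ → ZMod N
  | 0 => 0
  | j + 1 => K x j

lemma matpow {N : ℕ} (x : ZMod N) :
    ∀ j : ℕ, (mat x) ^ (j + 1) =
      !![K x (j + 1), -(Kp x (j + 1)); Kp x (j + 1), -(Kp x j)]
  | 0 => by
    rw [pow_one]
    simp [mat, K, Kp]
  | j + 1 => by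
    rw [pow_succ', matpow x j]
    ext i l
    fin_cases i <;> fin_cases l <;>
      rcases j with _ | j <;>
      simp [mat, K, Kp, Matrix.mul_apply, Fin.sum_univ_two] <;> ring

lemma M_replicate {N : ℕ} (k : ZMod N) (n : ℕ) :
    M (List.replicate n k) = (mat k) ^ n := by
  simp [M, List.reverse_replicate, List.map_replicate, List.prod_replicate]

lemma isSolution_replicate_of {N : ℕ} (k : ZMod N) (n : ℕ) (hn : 2 ≤ n)
    (h0 : K k (n - 1) = 0) (h1 : K k n = 1 ∨ K k n = -1) :
    IsSolution (List.replicate n k) := by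
  obtain ⟨m, rfl⟩ : ∃ m, n = m + 2 := ⟨n - 2, by omega⟩
  have h0' : K k (m + 1) = 0 := h0
  have hK2 : K k (m + 2) = -(K k m) := by
    show k * K k (m + 1) - K k m = -(K k m)
    rw [h0']; ring
  have hM : M (List.replicate (m + 2) k) =
      !![K k (m + 2), 0; 0, K k (m + 2)] := by
    rw [M_replicate, matpow]
    simp [Kp, h0', hK2]
  rcases h1 with h1 | h1
  · left; rw [hM, h1, Matrix.one_fin_two]
  · right; rw [hM, h1, Matrix.one_fin_two]
    norm_num
lemma of_isSolution {N : ℕ} (k : ZMod N) (m : ℕ)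
    (h : IsSolution (List.replicate (m + 1) k)) :
    K k m = 0 ∧ (K k (m + 1) = 1 ∨ K k (m + 1) = -1) := by
  rw [IsSolution, M_replicate, matpow, Matrix.one_fin_two] at h
  have hKp : Kp k (m + 1) = K k m := rfl
  rcases h with h | h
  · have h10 := congrFun (congrFun h 1) 0
    have h00 := congrFun (congrFun h 0) 0
    simp [hKp] at h10 h00
    exact ⟨h10, Or.inl h00⟩
  · have h10 := congrFun (congrFun h 1) 0
    have h00 := congrFun (congrFun h 0) 0
    simp [hKp] at h10 h00
    exact ⟨h10, Or.inr h00⟩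

lemma reducible_replicate {N : ℕ} (k : ZMod N) {n : ℕ}
    (h : Reducible (List.replicate n k)) :
    ∃ j, 1 ≤ j ∧ j + 3 ≤ n ∧ (K k j = 1 ∨ K k j = -1) := by
  obtain ⟨a, b, ha, hb, hbsol, hcyc⟩ := h
  have hob : osum a b = List.replicate n k := by
    rcases hcyc with ⟨i, hi⟩ | ⟨i, hi⟩
    · rw [List.rotate_replicate] at hi; exact hi
    · rw [List.reverse_replicate, List.rotate_replicate] at hi; exact hi
  have hlen : (osum a b).length = n := by rw [hob]; simp
  have hlen' : a.length + b.length - 2 = n := by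
    simp [osum] at hlen; omega
  have hall : ∀ x ∈ osum a b, x = k := fun x hx => by
    rw [hob] at hx; exact (List.eq_of_mem_replicate hx)
  -- structure of b
  have hbne : b ≠ [] := by intro h'; rw [h'] at hb; simp at hb
  have hbtne : b.tail ≠ [] := by
    intro h'
    have := congrArg List.length h'
    simp at this; omega
  have hmid : (b.drop 1).dropLast = List.replicate (b.length - 2) k := by
    rw [List.eq_replicate_iff]
    constructor
    · simp; omega
    · intro x hx
      exact hall x (by
        simp only [osum, List.mem_cons, List.mem_append]
        right; right; right; exact hx)
  set x := b.head hbne with hx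
  set y := b.tail.getLast hbtne with hy
  have hbstruct : b = x :: (List.replicate (b.length - 2) k ++ [y]) := by
    conv_lhs => rw [← List.cons_head_tail hbne,
      ← List.dropLast_append_getLast hbtne]
    rw [← hmid, List.drop_one]
  have hMb : M b = mat y * ((mat k) ^ (b.length - 2) * mat x) := by
    rw [hbstruct]
    simp [M, List.reverse_append, List.map_append, List.prod_append,
      List.reverse_replicate, List.map_replicate, List.prod_replicate,
      mul_assoc]
  obtain ⟨j, hj⟩ : ∃ j, b.length - 2 = j + 1 := ⟨b.length - 3, by omega⟩
  rw [hj] at hMb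
  have h11 : M b 1 1 = -(K k (j + 1)) := by
    rw [hMb, matpow]
    simp [mat, Matrix.mul_apply, Fin.sum_univ_two]
  refine ⟨j + 1, by omega, by omega, ?_⟩
  rcases hbsol with hs | hs
  · right
    have h1 := congrFun (congrFun hs 1) 1
    rw [h11, Matrix.one_apply_eq] at h1
    linear_combination -h1
  · left
    have h1 := congrFun (congrFun hs 1) 1
    rw [h11, Matrix.neg_apply, Matrix.one_apply_eq] at h1
    linear_combination -h1

lemma replicate_ne_pair {N : ℕ} (k : ZMod N) (n : ℕ) (hk : k ≠ 0) :
    List.replicate n k ≠ [0, 0] := by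
  intro h
  have hlen : n = 2 := by simpa using congrArg List.length h
  subst hlen
  simp [List.replicate] at h
  exact hk h

lemma main {N : ℕ} (k : ZMod N) (n : ℕ) (hn : 2 ≤ n) (hk : k ≠ 0)
    (hsol : K k (n - 1) = 0 ∧ (K k n = 1 ∨ K k n = -1))
    (hmin : ∀ m, m < n → 0 < m → ¬(K k (m - 1) = 0 ∧ (K k m = 1 ∨ K k m = -1)))
    (hKj : ∀ j, j < n → 1 ≤ j → j + 3 ≤ n → ¬(K k j = 1 ∨ K k j = -1)) :
    IrreducibleSol (List.replicate (monomialMinimalSize N k) k) := by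
  have hsize : monomialMinimalSize N k = n := by
    apply IsLeast.csInf_eq
    constructor
    · exact ⟨by omega, isSolution_replicate_of k n hn hsol.1 hsol.2⟩
    · intro m hm
      by_contra hlt
      push_neg at hlt
      obtain ⟨hm0, hmsol⟩ := hm
      obtain ⟨m', rfl⟩ : ∃ m', m = m' + 1 := ⟨m - 1, by omega⟩
      exact hmin (m' + 1) hlt hm0 (of_isSolution k m' hmsol)
  rw [hsize]
  refine ⟨isSolution_replicate_of k n hn hsol.1 hsol.2, ?_, replicate_ne_pair k n hk⟩
  intro hred
  obtain ⟨j, hj1, hj3, hjK⟩ := reducible_replicate k hred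
  exact hKj j (by omega) hj1 hj3 hjK

theorem stmt5 : MonomiallyIrreducible 8 ∧ MonomiallyIrreducible 12 ∧
    MonomiallyIrreducible 24 := by
  refine ⟨?_, ?_, ?_⟩ <;> intro k hk <;> fin_cases k
  · exact absurd rfl hk
  · exact main _ 3 (by norm_num) hk (by decide) (by decide) (by decide)
  · exact main _ 8 (by norm_num) hk (by decide) (by decide) (by decide)
  · exact main _ 6 (by norm_num) hk (by decide) (by decide) (by decide)
  · exact main _ 4 (by norm_num) hk (by decide) (by decide) (by decide)
  · exact main _ 6 (by norm_num) hk (by decide) (by decide) (by decide)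
  · exact main _ 8 (by norm_num) hk (by decide) (by decide) (by decide)
  · exact main _ 3 (by norm_num) hk (by decide) (by decide) (by decide)
  · exact absurd rfl hk
  · exact main _ 3 (by norm_num) hk (by decide) (by decide) (by decide)
  · exact main _ 12 (by norm_num) hk (by decide) (by decide) (by decide)
  · exact main _ 12 (by norm_num) hk (by decide) (by decide) (by decide)
  · exact main _ 12 (by norm_num) hk (by decide) (by decide) (by decide)
  · exact main _ 6 (by norm_num) hk (by decide) (by decide) (by decide)
  · exact main _ 4 (by norm_num) hk (by decide) (by decide) (by decide)
  · exact main _ 6 (by norm_num) hk (by decide) (by decide) (by decide)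
  · exact main _ 12 (by norm_num) hk (by decide) (by decide) (by decide)
  · exact main _ 12 (by norm_num) hk (by decide) (by decide) (by decide)
  · exact main _ 12 (by norm_num) hk (by decide) (by decide) (by decide)
  · exact main _ 3 (by norm_num) hk (by decide) (by decide) (by decide)
  · exact absurd rfl hk
  · exact main _ 3 (by norm_num) hk (by decide) (by decide) (by decide)
  · exact main _ 24 (by norm_num) hk (by decide) (by decide) (by decide)
  · exact main _ 12 (by norm_num) hk (by decide) (by decide) (by decide)
  · exact main _ 12 (by norm_num) hk (by decide) (by decide) (by decide)
  · exact main _ 6 (by norm_num) hk (by decide) (by decide) (by decide)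
  · exact main _ 8 (by norm_num) hk (by decide) (by decide) (by decide)
  · exact main _ 6 (by norm_num) hk (by decide) (by decide) (by decide)
  · exact main _ 12 (by norm_num) hk (by decide) (by decide) (by decide)
  · exact main _ 12 (by norm_num) hk (by decide) (by decide) (by decide)
  · exact main _ 24 (by norm_num) hk (by decide) (by decide) (by decide)
  · exact main _ 6 (by norm_num) hk (by decide) (by decide) (by decide)
  · exact main _ 4 (by norm_num) hk (by decide) (by decide) (by decide)
  · exact main _ 6 (by norm_num) hk (by decide) (by decide) (by decide)
  · exact main _ 24 (by norm_num) hk (by decide) (by decide) (by decide)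
  · exact main _ 12 (by norm_num) hk (by decide) (by decide) (by decide)
  · exact main _ 12 (by norm_num) hk (by decide) (by decide) (by decide)
  · exact main _ 6 (by norm_num) hk (by decide) (by decide) (by decide)
  · exact main _ 8 (by norm_num) hk (by decide) (by decide) (by decide)
  · exact main _ 6 (by norm_num) hk (by decide) (by decide) (by decide)
  · exact main _ 12 (by norm_num) hk (by decide) (by decide) (by decide)
  · exact main _ 12 (by norm_num) hk (by decide) (by decide) (by decide)
  · exact main _ 24 (by norm_num) hk (by decide) (by decide) (by decide)
  · exact main _ 3 (by norm_num) hk (by decide) (by decide) (by decide)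


end Monomial
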